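/- arXiv:1605.07432 — 2 statements merged into one kernel-verified Lean document; each statement's English description precedes it below -/
import Mathlib

section
/- Let 0 ≤ γ < α < 1 (or more generally γ < α with α > 0) and let f : (a,b] → ℝ be such that (t-a)^γ f(t) extends continuously to [a,b]. Then the Riemann–Liouville fractional integral I_a^α f(t) = (1/Γ(α)) ∫_a^t f(s)/(t-s)^{1-α} ds tends to 0 as t → a⁺. -/
open Real MeasureTheory Set Filter Topology

/-- Riemann–Liouville left-sided fractional integral of order `α` based at `a`. -/
noncomputable def RLI (a α : ℝ) (f : ℝ → ℝ) (t : ℝ) : ℝ :=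
  (1 / Real.Gamma α) * ∫ s in a..t, (t - s) ^ (α - 1) * f s

private lemma tendsto_const_rpow_zero (a p K : ℝ) (hp : 0 < p) :
    Tendsto (fun t => K * (t - a) ^ p) (𝓝[>] a) (𝓝 0) := by
  have h1 : Tendsto (fun t : ℝ => t - a) (𝓝 a) (𝓝 0) := by
    have this : Tendsto (fun t : ℝ => t - a) (𝓝 a) (𝓝 (a - a)) :=
      (continuous_id.sub (continuous_const (y := a))).tendsto a
    rwa [sub_self] at this
  have h2 : Tendsto (fun x : ℝ => x ^ p) (𝓝 0) (𝓝 0) := by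
    have := (Real.continuousAt_rpow_const 0 p (Or.inr hp.le)).tendsto
    simpa [Real.zero_rpow hp.ne'] using this
  have := (h2.comp h1).const_mul K
  simpa using this.mono_left nhdsWithin_le_nhds

theorem stmt_0 (a b α γ : ℝ) (f : ℝ → ℝ) (hab : a < b)
    (hγ : 0 ≤ γ) (hγα : γ < α)
    (hf : ∃ g : ℝ → ℝ, ContinuousOn g (Set.Icc a b) ∧
      ∀ t ∈ Set.Ioc a b, g t = (t - a) ^ γ * f t) :
    Tendsto (RLI a α f) (nhdsWithin a (Set.Ioi a)) (nhds 0) := by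
  obtain ⟨g, hg, hgf⟩ := hf
  have hmem : Ioc a b ∈ 𝓝[>] a := Ioc_mem_nhdsGT hab
  -- bound on g
  obtain ⟨M, hM⟩ := isCompact_Icc.exists_bound_of_continuousOn hg
  have hM0 : 0 ≤ M := (norm_nonneg _).trans (hM a ⟨le_refl a, hab.le⟩)
  -- pointwise bound on f
  have hfs : ∀ s ∈ Ioc a b, |f s| ≤ M * (s - a) ^ (-γ) := by
    intro s hs
    have hsa : 0 < s - a := sub_pos.2 hs.1
    have hfs' : f s = (s - a) ^ (-γ) * g s := by
      rw [hgf s hs, ← mul_assoc, ← Real.rpow_add hsa]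
      simp
    rw [hfs', abs_mul, abs_of_nonneg (Real.rpow_nonneg hsa.le _)]
    rw [mul_comm M _]
    exact mul_le_mul_of_nonneg_left (hM s ⟨hs.1.le, hs.2⟩) (Real.rpow_nonneg hsa.le _)
  by_cases hγ1 : γ < 1
  · -- beta-type bound
    set C : ℝ := ∫ u in (0:ℝ)..1, u ^ (-γ) * (1 - u) ^ (α - 1) with hC
    set K : ℝ := |1 / Real.Gamma α| * (M * |C|) with hK
    apply squeeze_zero_norm' (a := fun t => K * (t - a) ^ (α - γ))
    · filter_upwards [hmem] with t ht
      have hat : a < t := ht.1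
      have htb : t ≤ b := ht.2
      have hc : (0:ℝ) < t - a := sub_pos.2 hat
      -- the comparison function
      set F : ℝ → ℝ := fun s => (s - a) ^ (-γ) * (t - s) ^ (α - 1) with hF
      -- integrability of F on a..t
      set m : ℝ := (a + t) / 2 with hm
      have ham : a < m := by simp only [hm]; linarith
      have hmt : m < t := by simp only [hm]; linarith
      have hI1 : IntervalIntegrable F volume a m := by
        have h1 : IntervalIntegrable (fun s : ℝ => (s - a) ^ (-γ)) volume a m := by
          have := (intervalIntegral.intervalIntegrable_rpow' (a := 0) (b := m - a)
            (r := -γ) (by linarith)).comp_sub_right a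
          simpa using this
        have h2 : ContinuousOn (fun s : ℝ => (t - s) ^ (α - 1)) (uIcc a m) := by
          apply (continuousOn_const.sub continuousOn_id).rpow_const
          intro s hs
          rw [uIcc_of_le ham.le] at hs
          exact Or.inl (sub_ne_zero_of_ne (ne_of_gt (lt_of_le_of_lt hs.2 hmt)))
        exact h1.mul_continuousOn h2
      have hI2 : IntervalIntegrable F volume m t := by
        have h1 : IntervalIntegrable (fun s : ℝ => (t - s) ^ (α - 1)) volume m t := by
          have := (intervalIntegral.intervalIntegrable_rpow' (a := t - m) (b := 0)
            (r := α - 1) (by linarith)).comp_sub_left t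
          simpa using this
        have h2 : ContinuousOn (fun s : ℝ => (s - a) ^ (-γ)) (uIcc m t) := by
          apply (continuousOn_id.sub continuousOn_const).rpow_const
          intro s hs
          rw [uIcc_of_le hmt.le] at hs
          exact Or.inl (sub_ne_zero_of_ne (ne_of_gt (lt_of_lt_of_le ham hs.1)))
        exact h1.continuousOn_mul h2
      have hIF : IntervalIntegrable F volume a t := hI1.trans hI2
      have hIMF : IntervalIntegrable (fun s => M * F s) volume a t := hIF.const_mul M
      -- the norm bound
      have hbound : ‖∫ s in a..t, (t - s) ^ (α - 1) * f s‖ ≤ |∫ s in a..t, M * F s| := by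
        apply intervalIntegral.norm_integral_le_abs_of_norm_le _ hIMF
        rw [uIoc_of_le hat.le]
        refine (ae_restrict_iff' measurableSet_Ioc).2 (Eventually.of_forall ?_)
        intro s hs
        have hsa : 0 < s - a := sub_pos.2 hs.1
        have hts : 0 ≤ t - s := sub_nonneg.2 hs.2
        have hsb : s ∈ Ioc a b := ⟨hs.1, hs.2.trans htb⟩
        rw [Real.norm_eq_abs, abs_mul, abs_of_nonneg (Real.rpow_nonneg hts _), hF]
        calc (t - s) ^ (α - 1) * |f s| ≤ (t - s) ^ (α - 1) * (M * (s - a) ^ (-γ)) :=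
              mul_le_mul_of_nonneg_left (hfs s hsb) (Real.rpow_nonneg hts _)
          _ = M * ((s - a) ^ (-γ) * (t - s) ^ (α - 1)) := by ring
      -- computing the comparison integral by substitution
      have hsubst : ∫ s in a..t, F s = (t - a) ^ (α - γ) * C := by
        have h1 := intervalIntegral.integral_comp_mul_add (a := (0:ℝ)) (b := 1)
          (f := F) (c := t - a) hc.ne' a
        have h2 : ∫ u in (0:ℝ)..1, F ((t - a) * u + a)
            = (t - a) ^ (-γ) * (t - a) ^ (α - 1) * C := by
          rw [hC, ← intervalIntegral.integral_const_mul]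
          apply intervalIntegral.integral_congr
          intro u hu
          rw [uIcc_of_le (by norm_num : (0:ℝ) ≤ 1)] at hu
          have hu0 : 0 ≤ u := hu.1
          have hu1 : 0 ≤ 1 - u := by linarith [hu.2]
          have e1 : (t - a) * u + a - a = (t - a) * u := by ring
          have e2 : t - ((t - a) * u + a) = (t - a) * (1 - u) := by ring
          rw [hF]
          simp only [e1, e2]
          rw [Real.mul_rpow hc.le hu0, Real.mul_rpow hc.le hu1]
          ring
        rw [h2] at h1
        have h3 : (t - a) * 0 + a = a := by ring
        have h4 : (t - a) * 1 + a = t := by ring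
        rw [h3, h4, smul_eq_mul] at h1
        have h5 : (t - a) ^ (-γ) * (t - a) ^ (α - 1) * C
            = (t - a)⁻¹ * ((t - a) ^ (α - γ) * C) := by
          rw [← Real.rpow_add hc, ← Real.rpow_neg_one (t - a), ← mul_assoc,
            ← Real.rpow_add hc, show -γ + (α - 1) = -1 + (α - γ) by ring]
        rw [h5] at h1
        field_simp at h1
        linarith [h1]
      -- conclude
      have : ‖RLI a α f t‖ ≤ |1 / Real.Gamma α| * |∫ s in a..t, M * F s| := by
        rw [RLI, norm_mul, Real.norm_eq_abs, Real.norm_eq_abs]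
        exact mul_le_mul_of_nonneg_left hbound (abs_nonneg _)
      refine this.trans ?_
      rw [intervalIntegral.integral_const_mul, hsubst, hK]
      rw [abs_mul, abs_mul, abs_of_nonneg hM0,
        abs_of_nonneg (Real.rpow_nonneg hc.le _)]
      ring_nf
      exact le_refl _
    · exact tendsto_const_rpow_zero a (α - γ) K (by linarith)
  · -- γ ≥ 1, hence α > 1
    push_neg at hγ1
    have hα1 : 1 < α := lt_of_le_of_lt hγ1 hγα
    -- f is continuous on Ioc a b
    have hfc : ContinuousOn f (Ioc a b) := by
      have : ContinuousOn (fun s => (s - a) ^ (-γ) * g s) (Ioc a b) := by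
        apply ContinuousOn.mul
        · apply (continuousOn_id.sub continuousOn_const).rpow_const
          intro s hs
          exact Or.inl (sub_ne_zero_of_ne (ne_of_gt hs.1))
        · exact hg.mono Ioc_subset_Icc_self
      apply this.congr
      intro s hs
      have hsa : 0 < s - a := sub_pos.2 hs.1
      show f s = (s - a) ^ (-γ) * g s
      rw [hgf s hs, ← mul_assoc, ← Real.rpow_add hsa]
      simp
    by_cases hfi : IntervalIntegrable f volume a b
    · -- f integrable: kernel is bounded
      set h : ℝ → ℝ := fun s => (b - a) ^ (α - 1) * |f s| with hh
      have hhi : IntervalIntegrable h volume a b := (hfi.abs).const_mul _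
      set P : ℝ → ℝ := fun t => ∫ s in a..t, h s with hP
      apply squeeze_zero_norm' (a := fun t => |1 / Real.Gamma α| * |P t|)
      · filter_upwards [hmem] with t ht
        have hat : a < t := ht.1
        have htb : t ≤ b := ht.2
        have hbound : ‖∫ s in a..t, (t - s) ^ (α - 1) * f s‖ ≤ |P t| := by
          apply intervalIntegral.norm_integral_le_abs_of_norm_le _
            (hhi.mono_set ?_)
          · rw [uIoc_of_le hat.le]
            refine (ae_restrict_iff' measurableSet_Ioc).2 (Eventually.of_forall ?_)
            intro s hs
            have hts : 0 ≤ t - s := sub_nonneg.2 hs.2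
            rw [Real.norm_eq_abs, abs_mul, abs_of_nonneg (Real.rpow_nonneg hts _), hh]
            apply mul_le_mul_of_nonneg_right _ (abs_nonneg _)
            exact Real.rpow_le_rpow hts (by linarith [hs.1]) (by linarith)
          · rw [uIcc_of_le hat.le, uIcc_of_le hab.le]
            exact Icc_subset_Icc le_rfl htb
        rw [RLI, norm_mul, Real.norm_eq_abs, Real.norm_eq_abs]
        exact mul_le_mul_of_nonneg_left hbound (abs_nonneg _)
      · have hPc : ContinuousOn P (Icc a b) := by
          have := intervalIntegral.continuousOn_primitive_interval'
            (b₁ := a) (b₂ := b) (μ := volume) (f := h) hhi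
            (by rw [uIcc_of_le hab.le]; exact ⟨le_refl a, hab.le⟩)
          rwa [uIcc_of_le hab.le] at this
        have hPa : P a = 0 := by simp [hP]
        have h1 : Tendsto P (𝓝[>] a) (𝓝 0) := by
          rw [← nhdsWithin_Ioc_eq_nhdsGT hab]
          have := (hPc a ⟨le_refl a, hab.le⟩).mono Ioc_subset_Icc_self
          rw [ContinuousWithinAt, hPa] at this
          exact this
        have h2 : Tendsto (fun t => |1 / Real.Gamma α| * |P t|) (𝓝[>] a)
            (𝓝 (|1 / Real.Gamma α| * |0|)) :=
          ((continuous_abs.tendsto 0).comp h1).const_mul _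
        simpa using h2
    · -- f not integrable: the RL integral is identically 0 near a
      have hzero : ∀ t ∈ Ioc a b, RLI a α f t = 0 := by
        intro t ht
        have hat : a < t := ht.1
        have htb : t ≤ b := ht.2
        have hni : ¬ IntervalIntegrable (fun s => (t - s) ^ (α - 1) * f s) volume a t := by
          intro H
          set m : ℝ := (a + t) / 2 with hm
          have ham : a < m := by simp only [hm]; linarith
          have hmt : m < t := by simp only [hm]; linarith
          have H1 : IntervalIntegrable (fun s => (t - s) ^ (α - 1) * f s) volume a m :=
            H.mono_set (by
              rw [uIcc_of_le ham.le, uIcc_of_le hat.le]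
              exact Icc_subset_Icc le_rfl hmt.le)
          have H2 : IntervalIntegrable
              (fun s => (fun s => (t - s) ^ (1 - α)) s * ((t - s) ^ (α - 1) * f s))
              volume a m := by
            apply H1.continuousOn_mul
            apply (continuousOn_const.sub continuousOn_id).rpow_const
            intro s hs
            rw [uIcc_of_le ham.le] at hs
            exact Or.inl (sub_ne_zero_of_ne (ne_of_gt (lt_of_le_of_lt hs.2 hmt)))
          have H3 : IntervalIntegrable f volume a m := by
            apply H2.congr
            rw [uIoc_of_le ham.le]
            intro s hs
            have hts : 0 < t - s := sub_pos.2 (hs.2.trans_lt hmt)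
            show (t - s) ^ (1 - α) * ((t - s) ^ (α - 1) * f s) = f s
            rw [← mul_assoc, ← Real.rpow_add hts]
            simp
          have H4 : IntervalIntegrable f volume m b := by
            apply ContinuousOn.intervalIntegrable
            apply hfc.mono
            rw [uIcc_of_le (hmt.le.trans htb)]
            intro x hx
            exact ⟨lt_of_lt_of_le ham hx.1, hx.2⟩
          exact hfi (H3.trans H4)
        rw [RLI, intervalIntegral.integral_undef hni, mul_zero]
      apply Tendsto.congr' _ tendsto_const_nhds
      filter_upwards [hmem] with t ht
      exact (hzero t ht).symm
end

section
/- Let γ > -1 and m > 1, and let b ≥ 0. Then there is no nontrivial function y ∈ C¹([0,∞)) with y(0) = b satisfying y'(t) ≥ t^γ |y(t)|^m for all t > 0. Equivalently, any global solution of this differential inequality must be identically zero. -/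
open Real Set Filter Topology

theorem stmt_7 (γ m b : ℝ) (hγ : -1 < γ) (hm : 1 < m) (hb : 0 ≤ b)
    (y : ℝ → ℝ)
    (hy : ContDiffOn ℝ 1 y (Set.Ici 0))
    (hy0 : y 0 = b)
    (hineq : ∀ t > (0 : ℝ), t ^ γ * |y t| ^ m ≤ deriv y t) :
    ∀ t ≥ (0 : ℝ), y t = 0 := by
  have hdiffOn : DifferentiableOn ℝ y (Set.Ici 0) := hy.differentiableOn one_ne_zero
  have hdiffAt : ∀ x : ℝ, 0 < x → DifferentiableAt ℝ y x := fun x hx =>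
    (hdiffOn x hx.le).differentiableAt (Ici_mem_nhds hx)
  have hmono : MonotoneOn y (Set.Ici 0) := by
    apply monotoneOn_of_deriv_nonneg (convex_Ici 0) hy.continuousOn
    · rw [interior_Ici]
      exact fun x hx => (hdiffAt x hx).differentiableWithinAt
    · rw [interior_Ici]
      intro x hx
      have h0 := hineq x hx
      have h1 : 0 ≤ x ^ γ := Real.rpow_nonneg (le_of_lt hx) γ
      have h2 : 0 ≤ |y x| ^ m := Real.rpow_nonneg (abs_nonneg _) m
      nlinarith
  intro t ht
  by_contra hne
  have hynn : ∀ s ≥ (0:ℝ), 0 ≤ y s := by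
    intro s hs
    calc (0:ℝ) ≤ b := hb
    _ = y 0 := hy0.symm
    _ ≤ y s := hmono (mem_Ici.mpr le_rfl) (mem_Ici.mpr hs) hs
  have hyt : 0 < y t := (hynn t ht).lt_of_ne (Ne.symm hne)
  set t₀ : ℝ := t + 1 with ht₀def
  have ht₀ : (0:ℝ) < t₀ := by linarith
  have hc : 0 < y t₀ :=
    lt_of_lt_of_le hyt (hmono (mem_Ici.mpr ht) (mem_Ici.mpr ht₀.le) (by linarith))
  have hypos : ∀ s, t₀ ≤ s → 0 < y s := fun s hs =>
    lt_of_lt_of_le hc (hmono (mem_Ici.mpr ht₀.le) (mem_Ici.mpr (ht₀.le.trans hs)) hs)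
  set g : ℝ → ℝ := fun u => y u ^ (1 - m) + (m - 1) / (γ + 1) * u ^ (γ + 1) with hgdef
  have hγ1 : (0:ℝ) < γ + 1 := by linarith
  -- g has nonpositive derivative on (t₀, ∞)
  have hG : ∀ x, t₀ < x →
      HasDerivAt g (deriv y x * (1 - m) * y x ^ (1 - m - 1)
        + (m - 1) / (γ + 1) * ((γ + 1) * x ^ (γ + 1 - 1))) x := by
    intro x hx
    have x0 : (0:ℝ) < x := lt_trans ht₀ hx
    have hY : 0 < y x := hypos x hx.le
    have h1 : HasDerivAt y (deriv y x) x := (hdiffAt x x0).hasDerivAt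
    have h2 := h1.rpow_const (p := 1 - m) (Or.inl hY.ne')
    have h3 := (Real.hasDerivAt_rpow_const (x := x) (p := γ + 1)
      (Or.inl x0.ne')).const_mul ((m - 1) / (γ + 1))
    exact h2.add h3
  have hanti : AntitoneOn g (Set.Ici t₀) := by
    apply antitoneOn_of_deriv_nonpos (convex_Ici t₀)
    · -- continuity of g on Ici t₀
      have hycont : ContinuousOn y (Set.Ici t₀) :=
        hy.continuousOn.mono (Ici_subset_Ici.mpr ht₀.le)
      have c1 : ContinuousOn (fun u => y u ^ (1 - m)) (Set.Ici t₀) :=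
        hycont.rpow_const (fun x hx => Or.inl (ne_of_gt (hypos x hx)))
      have c2 : Continuous (fun u : ℝ => u ^ (γ + 1)) := by
        rw [continuous_iff_continuousAt]
        exact fun x => Real.continuousAt_rpow_const x _ (Or.inr hγ1.le)
      exact c1.add ((continuous_const.mul c2).continuousOn)
    · rw [interior_Ici]
      exact fun x hx => ((hG x hx).differentiableAt).differentiableWithinAt
    · rw [interior_Ici]
      intro x hx
      rw [(hG x hx).deriv]
      have x0 : (0:ℝ) < x := lt_trans ht₀ hx
      have hY : 0 < y x := hypos x hx.le
      have hd := hineq x x0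
      rw [abs_of_pos hY] at hd
      have hPQ : y x ^ m * y x ^ (-m) = 1 := by
        rw [← Real.rpow_add hY]; simp
      have hP : 0 < y x ^ (-m) := Real.rpow_pos_of_pos hY _
      have hQ : 0 < y x ^ m := Real.rpow_pos_of_pos hY _
      have hxg : 0 < x ^ γ := Real.rpow_pos_of_pos x0 _
      have hsimp1 : (1:ℝ) - m - 1 = -m := by ring
      have hsimp2 : γ + 1 - 1 = γ := by ring
      rw [hsimp1, hsimp2]
      have hne1 : (γ + 1) ≠ 0 := ne_of_gt hγ1
      have hcancel : (m - 1) / (γ + 1) * ((γ + 1) * x ^ γ) = (m - 1) * x ^ γ := by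
        field_simp
      rw [hcancel]
      have key := mul_le_mul_of_nonneg_right hd hP.le
      have key2 : x ^ γ ≤ deriv y x * y x ^ (-m) := by
        calc x ^ γ = x ^ γ * (y x ^ m * y x ^ (-m)) := by rw [hPQ, mul_one]
        _ = x ^ γ * y x ^ m * y x ^ (-m) := by ring
        _ ≤ _ := key
      nlinarith [key2, hm]
  -- choose T large to get a contradiction
  have htend : Tendsto (fun x : ℝ => x ^ (γ + 1)) atTop atTop := tendsto_rpow_atTop hγ1
  obtain ⟨T, hT1, hT2⟩ :=
    ((htend.eventually_gt_atTop ((γ + 1) / (m - 1) * g t₀)).and (eventually_ge_atTop t₀)).exists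
  have hle : g T ≤ g t₀ := hanti (mem_Ici.mpr le_rfl) (mem_Ici.mpr hT2) hT2
  have hYT : 0 < y T ^ (1 - m) := Real.rpow_pos_of_pos (hypos T hT2) _
  have hk : 0 < (m - 1) / (γ + 1) := div_pos (by linarith) hγ1
  have hne1 : (γ + 1) ≠ 0 := ne_of_gt hγ1
  have hne2 : (m - 1) ≠ 0 := ne_of_gt (by linarith)
  have hmul : (m - 1) / (γ + 1) * ((γ + 1) / (m - 1) * g t₀) = g t₀ := by
    field_simp
  have : g t₀ < (m - 1) / (γ + 1) * T ^ (γ + 1) := by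
    calc g t₀ = (m - 1) / (γ + 1) * ((γ + 1) / (m - 1) * g t₀) := hmul.symm
    _ < (m - 1) / (γ + 1) * T ^ (γ + 1) := by
        exact mul_lt_mul_of_pos_left hT1 hk
  have hgT : g T = y T ^ (1 - m) + (m - 1) / (γ + 1) * T ^ (γ + 1) := rfl
  linarith [hgT ▸ hle]
end
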